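/- Let (x_n) be a strictly increasing sequence in ℕ and f : ℕ → ℕ strictly monotone. Suppose the sequence of values (x_k) dominates f ∘ (k ↦ 2^{k+1}), i.e. x_k > f(2^{k+1}) for all k. Then for every i, the set FS(x_n) ∩ [0, f(i)) has fewer than i elements. -/

import Mathlib

/-- `FS(x_n)`: the set of finite sums over nonempty finite index sets. -/
def FS (x : ℕ → ℕ) : Set ℕ :=
  {m | ∃ s : Finset ℕ, s.Nonempty ∧ s.sum x = m}

theorem stmt_7 (x : ℕ → ℕ) (hx : StrictMono x) (f : ℕ → ℕ) (hf : StrictMono f)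
    (hdom : ∀ k : ℕ, f (2 ^ (k + 1)) < x k) :
    ∀ i : ℕ, 0 < i → (FS x ∩ Set.Iio (f i)).ncard < i := by
  intro i hi
  set j := Nat.log 2 i with hj
  have hsub : FS x ∩ Set.Iio (f i) ⊆
      ↑((((Finset.range j).powerset.erase ∅)).image (fun s => s.sum x)) := by
    rintro m ⟨⟨s, hs, rfl⟩, hm⟩
    simp only [Finset.coe_image, Set.mem_image, Finset.mem_coe, Finset.mem_erase,
      Finset.mem_powerset]
    refine ⟨s, ⟨Finset.nonempty_iff_ne_empty.mp hs, ?_⟩, rfl⟩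
    intro k hk
    have hxk : x k ≤ s.sum x := Finset.single_le_sum (fun _ _ => Nat.zero_le _) hk
    have h1 : f (2 ^ (k + 1)) < f i := lt_of_lt_of_le (lt_of_lt_of_le (hdom k) hxk) hm.le
    have h2 : 2 ^ (k + 1) < i := hf.lt_iff_lt.mp h1
    have h3 : k + 1 ≤ j := (Nat.le_log_iff_pow_le one_lt_two hi.ne').mpr h2.le
    exact Finset.mem_range.mpr (Nat.lt_of_succ_le h3)
  calc (FS x ∩ Set.Iio (f i)).ncard
      ≤ (((Finset.range j).powerset.erase ∅).image (fun s => s.sum x)).card := by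
        exact (Set.ncard_le_ncard hsub (Finset.finite_toSet _)).trans_eq (Set.ncard_coe_finset _)
    _ ≤ ((Finset.range j).powerset.erase ∅).card := Finset.card_image_le
    _ ≤ 2 ^ j - 1 := by
        simp [Finset.card_erase_of_mem, Finset.card_powerset]
    _ < i := by
        have h4 : 2 ^ j ≤ i := Nat.pow_log_le_self 2 hi.ne'
        have : (1:ℕ) ≤ 2 ^ j := Nat.one_le_two_pow
        omega
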